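/- For all real p with 1 < p < 2, one has 2^(2 - 2/p) > p(p-1). -/

import Mathlib

theorem stmt3 (p : ℝ) (hp1 : 1 < p) (hp2 : p < 2) :
    (2 : ℝ) ^ (2 - 2 / p) > p * (p - 1) := by
  have hp0 : 0 < p := by linarith
  have hL : Real.log 2 < 0.6931471808 := Real.log_two_lt_d9
  have hL0 : 0.6931471803 < Real.log 2 := Real.log_two_gt_d9
  set L := Real.log 2 with hLdef
  have h1 : (2:ℝ) ^ (2 - 2/p) = Real.exp ((2 - 2/p) * L) := by
    rw [Real.rpow_def_of_pos (by norm_num), hLdef]; ring_nf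
  have key : Real.exp ((2 - 2/p) * L) ≥ 2 * (1 + (1 - 2/p) * L) := by
    have he : (2 - 2/p) * L = L + (1 - 2/p) * L := by ring
    rw [he, Real.exp_add, Real.exp_log (by norm_num : (0:ℝ) < 2)]
    have h := Real.add_one_le_exp ((1 - 2/p) * L)
    nlinarith [Real.exp_pos ((1 - 2/p) * L)]
  have pos : (2 - p) * (p^2 + p - 2*L) > 0 :=
    mul_pos (by linarith) (by nlinarith [sq_nonneg (p-1)])
  have h2 : 2 * (1 + (1 - 2/p) * L) - p * (p - 1) = (2 - p) * (p^2 + p - 2*L) / p := by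
    field_simp
    ring
  have h3 : 2 * (1 + (1 - 2/p) * L) - p * (p - 1) > 0 := by
    rw [h2]; positivity
  rw [h1]
  linarith
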